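/- Let h(z) ∈ ℂ((z)) with h'(z) invertible, c ∈ ℂ, b(z) ∈ ℂ((z)), and define σ(L_i) := -(h(z)^{i+1}/h'(z))∂_z - (i+1)c·h(z)^i + (h(z)^{i+1}/h'(z))·b(z) as first-order differential operators on ℂ((z)) for i ≥ -1. Then [σ(L_i), σ(L_j)] = (i-j)σ(L_{i+j}) for all i,j ≥ -1, i.e., σ defines a Lie algebra homomorphism from W_> to Diff¹(ℂ((z))). -/

import Mathlib

/-- The derivative `∂_z` on formal Laurent series `ℂ((z))`, acting on coefficients by
`(∂_z f).coeff n = (n+1) · f.coeff (n+1)`. -/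
noncomputable def Dz : LaurentSeries ℂ →ₗ[ℂ] LaurentSeries ℂ where
  toFun f :=
    { coeff := fun n => ((n + 1 : ℤ) : ℂ) * f.coeff (n + 1)
      isPWO_support' := by
        refine (f.isPWO_support'.image_of_monotone
          (f := fun m => m - 1) (fun a b hab => by dsimp; omega)).mono ?_
        intro n hn
        simp only [Function.mem_support] at hn
        refine ⟨n + 1, fun h => hn (by rw [h, mul_zero]), by dsimp; ring⟩ }
  map_add' f g := by ext n; simp [mul_add]
  map_smul' c f := by ext n; simp; ring

/-- Multiplication by a fixed Laurent series `g` as a `ℂ`-linear operator on `ℂ((z))`. -/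
noncomputable def mulOp (g : LaurentSeries ℂ) : LaurentSeries ℂ →ₗ[ℂ] LaurentSeries ℂ where
  toFun f := g * f
  map_add' f1 f2 := mul_add g f1 f2
  map_smul' c f := by
    have h : ∀ x : LaurentSeries ℂ, c • x = (HahnSeries.single (0 : ℤ) c) * x :=
      fun x => (HahnSeries.single_zero_mul_eq_smul).symm
    simp only [RingHom.id_apply, h]
    ring

/-- The first-order differential operator
`σ(L_i) = -(h^{i+1}/h') ∂_z - (i+1) c h^i + (h^{i+1}/h') b` on `ℂ((z))`
(powers of `h` are `zpow`'s, which is legitimate since `ℂ((z))` is a field). -/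
noncomputable def sigmaHCB (h : LaurentSeries ℂ) (c : ℂ) (b : LaurentSeries ℂ)
    (i : ℤ) : LaurentSeries ℂ →ₗ[ℂ] LaurentSeries ℂ :=
  (-(1 : ℂ)) • (mulOp (h ^ (i + 1) / Dz h) ∘ₗ Dz)
    - (((i + 1 : ℤ) : ℂ) * c) • mulOp (h ^ i)
    + mulOp ((h ^ (i + 1) / Dz h) * b)

lemma Dz_coeff (f : LaurentSeries ℂ) (n : ℤ) :
    (Dz f).coeff n = ((n + 1 : ℤ) : ℂ) * f.coeff (n + 1) := rfl

lemma mulOp_apply (g f : LaurentSeries ℂ) : mulOp g f = g * f := rfl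

/-- Euler operator `z ∂_z`. -/
noncomputable def Ez (f : LaurentSeries ℂ) : LaurentSeries ℂ where
  coeff n := ((n : ℤ) : ℂ) * f.coeff n
  isPWO_support' := f.isPWO_support'.mono (fun n hn => by
    simp only [Function.mem_support] at hn ⊢
    intro h; exact hn (by rw [h, mul_zero]))

lemma Ez_coeff (f : LaurentSeries ℂ) (n : ℤ) : (Ez f).coeff n = ((n : ℤ) : ℂ) * f.coeff n := rfl

lemma Ez_support (f : LaurentSeries ℂ) : (Ez f).support ⊆ f.support := by
  intro n hn
  simp only [HahnSeries.mem_support, Ez_coeff] at hn ⊢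
  intro h; exact hn (by rw [h, mul_zero])

lemma Ez_mul (f g : LaurentSeries ℂ) : Ez (f * g) = Ez f * g + f * Ez g := by
  ext n
  rw [HahnSeries.coeff_add,
    HahnSeries.coeff_mul_left' f.isPWO_support (Ez_support f),
    HahnSeries.coeff_mul_right' g.isPWO_support (Ez_support g)]
  rw [show (Ez (f * g)).coeff n = ((n : ℤ) : ℂ) * (f * g).coeff n from rfl,
    HahnSeries.coeff_mul, Finset.mul_sum, ← Finset.sum_add_distrib]
  refine Finset.sum_congr rfl (fun ij hij => ?_)
  obtain ⟨-, -, hsum⟩ := Finset.mem_addAntidiagonal.1 hij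
  rw [Ez_coeff, Ez_coeff, ← hsum]
  push_cast
  ring

lemma Dz_eq_single_mul (f : LaurentSeries ℂ) :
    Dz f = HahnSeries.single (-1 : ℤ) (1 : ℂ) * Ez f := by
  ext n
  have h := HahnSeries.coeff_single_mul_add (r := (1 : ℂ)) (x := Ez f) (a := n + 1) (b := (-1 : ℤ))
  rw [show n + 1 + -1 = n by ring] at h
  rw [h, one_mul, Dz_coeff, Ez_coeff]

lemma Dz_mul (f g : LaurentSeries ℂ) : Dz (f * g) = Dz f * g + f * Dz g := by
  rw [Dz_eq_single_mul, Dz_eq_single_mul, Dz_eq_single_mul, Ez_mul]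
  ring

lemma Dz_one : Dz (1 : LaurentSeries ℂ) = 0 := by
  have h := Dz_mul 1 1
  rw [mul_one, one_mul, mul_one] at h
  exact (left_eq_add.mp h)

lemma Dz_inv {x : LaurentSeries ℂ} (hx : x ≠ 0) :
    Dz x⁻¹ = -(Dz x * x⁻¹ * x⁻¹) := by
  have h := Dz_mul x x⁻¹
  rw [mul_inv_cancel₀ hx, Dz_one] at h
  have h2 : x⁻¹ * x = 1 := inv_mul_cancel₀ hx
  linear_combination (-(x⁻¹ : LaurentSeries ℂ)) * h - Dz x⁻¹ * h2

lemma Dz_zpow_mul {x : LaurentSeries ℂ} (hx : x ≠ 0) (k : ℤ) :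
    Dz (x ^ k) * x = (k : LaurentSeries ℂ) * (x ^ k * Dz x) := by
  induction k using Int.induction_on with
  | zero => simp [Dz_one]
  | succ n ih =>
      rw [zpow_add_one₀ hx, Dz_mul]
      push_cast at ih ⊢
      linear_combination x * ih
  | pred n ih =>
      rw [show (-(n : ℤ) - 1) = (-(n : ℤ)) - 1 from rfl, zpow_sub_one₀ hx, Dz_mul, Dz_inv hx]
      have h2 : x⁻¹ * x = 1 := inv_mul_cancel₀ hx
      push_cast at ih ⊢
      linear_combination x⁻¹ * ih - x ^ (-(n : ℤ)) * Dz x * x⁻¹ * h2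

lemma Dz_zpow {x : LaurentSeries ℂ} (hx : x ≠ 0) (k : ℤ) :
    Dz (x ^ k) = (k : LaurentSeries ℂ) * x ^ k * x⁻¹ * Dz x := by
  have h := Dz_zpow_mul hx k
  have h2 : x⁻¹ * x = 1 := inv_mul_cancel₀ hx
  apply mul_right_cancel₀ hx
  rw [h]
  linear_combination (-((k : LaurentSeries ℂ) * x ^ k * Dz x)) * h2

set_option maxHeartbeats 1600000 in
/-- For any data `(h, c, b)` with `h'` invertible, the operators
`σ(L_i) = -(h^{i+1}/h') ∂_z - (i+1) c h^i + (h^{i+1}/h') b` define a Lie algebra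
homomorphism `W_> → Diff¹(ℂ((z)))`: `[σ(L_i), σ(L_j)] = (i-j) σ(L_{i+j})`. -/
theorem sigmaHCB_is_hom (h : LaurentSeries ℂ) (c : ℂ) (b : LaurentSeries ℂ)
    (hd : Dz h ≠ 0) :
    ∀ i j : ℤ, -1 ≤ i → -1 ≤ j →
      sigmaHCB h c b i ∘ₗ sigmaHCB h c b j - sigmaHCB h c b j ∘ₗ sigmaHCB h c b i
        = ((i - j : ℤ) : ℂ) • sigmaHCB h c b (i + j) := by
  have hh : h ≠ 0 := by rintro rfl; exact hd (map_zero Dz)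
  have smulL : ∀ (r : ℂ) (x : LaurentSeries ℂ), r • x = HahnSeries.C r * x :=
    fun r x => (HahnSeries.C_mul_eq_smul).symm
  have Ccast : ∀ k : ℤ, (HahnSeries.C ((k : ℤ) : ℂ) : LaurentSeries ℂ)
      = ((k : ℤ) : LaurentSeries ℂ) := fun k => map_intCast HahnSeries.C k
  -- normal form of sigma
  have sform : ∀ i : ℤ, sigmaHCB h c b i
      = mulOp (-(h ^ (i + 1) / Dz h)) ∘ₗ Dz
        + mulOp ((h ^ (i + 1) / Dz h) * b
            - ((((i : ℤ) : LaurentSeries ℂ) + 1) * HahnSeries.C c) * h ^ i) := by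
    intro i
    apply LinearMap.ext; intro x
    simp only [sigmaHCB, LinearMap.add_apply, LinearMap.sub_apply, LinearMap.smul_apply,
      LinearMap.comp_apply, mulOp_apply]
    simp only [smulL, map_mul, map_neg, map_one, Ccast]
    push_cast
    ring
  -- commutator of two first-order operators
  have key : ∀ f g F G : LaurentSeries ℂ,
      (mulOp f ∘ₗ Dz + mulOp g) ∘ₗ (mulOp F ∘ₗ Dz + mulOp G)
        - (mulOp F ∘ₗ Dz + mulOp G) ∘ₗ (mulOp f ∘ₗ Dz + mulOp g)
      = mulOp (f * Dz F - F * Dz f) ∘ₗ Dz + mulOp (f * Dz G - F * Dz g) := by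
    intro f g F G
    apply LinearMap.ext; intro x
    simp only [LinearMap.sub_apply, LinearMap.add_apply, LinearMap.comp_apply, mulOp_apply,
      map_add, Dz_mul]
    ring
  have smul_form : ∀ (a : ℤ) (u v : LaurentSeries ℂ),
      ((a : ℤ) : ℂ) • (mulOp u ∘ₗ Dz + mulOp v)
        = mulOp (((a : ℤ) : LaurentSeries ℂ) * u) ∘ₗ Dz
          + mulOp (((a : ℤ) : LaurentSeries ℂ) * v) := by
    intro a u v
    apply LinearMap.ext; intro x
    simp only [LinearMap.smul_apply, LinearMap.add_apply, LinearMap.comp_apply, mulOp_apply]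
    simp only [smulL, Ccast]
    ring
  intro i j _ _
  rw [sform i, sform j, sform (i + j), key, smul_form]
  have hE1 : (-(h ^ (i + 1) / Dz h)) * Dz (-(h ^ (j + 1) / Dz h))
      - (-(h ^ (j + 1) / Dz h)) * Dz (-(h ^ (i + 1) / Dz h))
      = ((i - j : ℤ) : LaurentSeries ℂ) * (-(h ^ (i + j + 1) / Dz h)) := by
    simp only [div_eq_mul_inv, map_neg, Dz_mul, Dz_inv hd, Dz_zpow hh,
      zpow_add₀ hh, zpow_one]
    have hu : Dz h * (Dz h)⁻¹ = 1 := mul_inv_cancel₀ hd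
    push_cast
    field_simp
    linear_combination
  have hE2 : (-(h ^ (i + 1) / Dz h))
        * Dz ((h ^ (j + 1) / Dz h) * b
            - ((((j : ℤ) : LaurentSeries ℂ) + 1) * HahnSeries.C c) * h ^ j)
      - (-(h ^ (j + 1) / Dz h))
        * Dz ((h ^ (i + 1) / Dz h) * b
            - ((((i : ℤ) : LaurentSeries ℂ) + 1) * HahnSeries.C c) * h ^ i)
      = ((i - j : ℤ) : LaurentSeries ℂ)
        * ((h ^ (i + j + 1) / Dz h) * b
            - ((((i + j : ℤ) : LaurentSeries ℂ) + 1) * HahnSeries.C c) * h ^ (i + j)) := by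
    have hC : Dz (HahnSeries.C c : LaurentSeries ℂ) = 0 := by
      ext n
      rw [Dz_coeff, HahnSeries.C_apply]
      by_cases hn : n + 1 = 0
      · rw [hn]; push_cast; ring_nf; simp [hn]
      · rw [HahnSeries.coeff_single_of_ne (fun hc => hn (by omega)), mul_zero, HahnSeries.coeff_zero]
    have hInt : ∀ k : ℤ, Dz ((k : ℤ) : LaurentSeries ℂ) = 0 := by
      intro k
      rw [← Ccast k, show ((HahnSeries.C ((k:ℤ):ℂ)) : LaurentSeries ℂ) = ((k:ℤ):ℂ) • 1 by
        rw [smulL]; rw [mul_one]]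
      rw [map_smul, Dz_one, smul_zero]
    simp only [div_eq_mul_inv, map_sub, map_neg, Dz_mul, Dz_inv hd, Dz_zpow hh, hC, hInt,
      Dz_one, map_add, zpow_add₀ hh, zpow_one]
    have hu : Dz h * (Dz h)⁻¹ = 1 := mul_inv_cancel₀ hd
    push_cast
    field_simp
    linear_combination
  rw [hE1, hE2]
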